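/- Let 𝔄 and 𝔅 be Banach spaces and let 𝓕 : 𝔄 → 𝔅 be a map of the form 𝓕(x) − 𝓕(0) = 𝓛(x) + 𝓝(x), where 𝓛 : 𝔄 → 𝔅 is a continuous linear isomorphism with continuous inverse satisfying ‖𝓛⁻¹‖ ≤ C₁, and 𝓝 : 𝔄 → 𝔅 satisfies 𝓝(0) = 0. Assume there exist constants r > 0 and C₂ > 0 with r < 1/(5·C₁·C₂) such that (a) ‖𝓝(x) − 𝓝(y)‖ ≤ C₂·(‖x‖ + ‖y‖)·‖x − y‖ for all x, y in the open ball B_r(0) ⊂ 𝔄, and (b) ‖𝓕(0)‖ ≤ r/(2·C₁). Then there exists a solution x ∈ B_r(0) of 𝓕(x) = 0 with ‖x‖ ≤ 2·C₁·‖𝓕(0)‖, and this solution is the unique solution of 𝓕(x) = 0 in B_r(0). -/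

import Mathlib

open Metric Set

set_option maxHeartbeats 1000000 in
/-- **quantitative implicit function theorem.** Let 𝓕 : 𝔄 → 𝔅 be a map
between Banach spaces with 𝓕(x) − 𝓕(0) = 𝓛(x) + 𝓝(x), where 𝓛 is a continuous linear
isomorphism with ‖𝓛⁻¹‖ ≤ C₁ and 𝓝(0) = 0. If for some r > 0, C₂ > 0 with
r < 1/(5C₁C₂) one has ‖𝓝(x) − 𝓝(y)‖ ≤ C₂(‖x‖+‖y‖)‖x−y‖ on B_r(0) and
‖𝓕(0)‖ ≤ r/(2C₁), then 𝓕 has a zero x in B_r(0) with ‖x‖ ≤ 2C₁‖𝓕(0)‖, and this zero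
is the unique zero of 𝓕 in B_r(0). -/
theorem stmt_10 {A B : Type*}
    [NormedAddCommGroup A] [NormedSpace ℝ A] [CompleteSpace A]
    [NormedAddCommGroup B] [NormedSpace ℝ B] [CompleteSpace B]
    (F N : A → B) (L : A ≃L[ℝ] B) (C₁ C₂ r : ℝ)
    (hL : ‖(L.symm : B →L[ℝ] A)‖ ≤ C₁)
    (hdecomp : ∀ x : A, F x - F 0 = L x + N x)
    (hN0 : N 0 = 0)
    (hr : 0 < r) (hC₂ : 0 < C₂) (hrC : r < 1 / (5 * C₁ * C₂))
    (ha : ∀ x ∈ Metric.ball (0 : A) r, ∀ y ∈ Metric.ball (0 : A) r,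
      ‖N x - N y‖ ≤ C₂ * (‖x‖ + ‖y‖) * ‖x - y‖)
    (hb : ‖F 0‖ ≤ r / (2 * C₁)) :
    ∃ x ∈ Metric.ball (0 : A) r, F x = 0 ∧ ‖x‖ ≤ 2 * C₁ * ‖F 0‖ ∧
      ∀ y ∈ Metric.ball (0 : A) r, F y = 0 → y = x := by
  -- C₁ is positive
  have hC₁ : 0 < C₁ := by
    by_contra h
    push_neg at h
    have h5 : 5 * C₁ * C₂ ≤ 0 := by nlinarith
    have : (1 : ℝ) / (5 * C₁ * C₂) ≤ 0 := one_div_nonpos.mpr h5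
    linarith
  -- the key smallness constant
  have hk : 2 * C₁ * C₂ * r < 2 / 5 := by
    have h5 : 0 < 5 * C₁ * C₂ := by positivity
    have h6 : r * (5 * C₁ * C₂) < 1 := (lt_div_iff₀ h5).mp hrC
    nlinarith
  have hbC : C₁ * ‖F 0‖ ≤ r / 2 := by
    have := mul_le_mul_of_nonneg_left hb (le_of_lt hC₁)
    calc C₁ * ‖F 0‖ ≤ C₁ * (r / (2 * C₁)) := this
      _ = r / 2 := by field_simp
  -- the iteration map
  set T : A → A := fun x => L.symm (-(F 0) - N x) with hT
  have hFexp : ∀ x : A, F x = F 0 + (L x + N x) := fun x => by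
    have h := hdecomp x
    rw [sub_eq_iff_eq_add] at h
    rw [h]; abel
  -- fixed points of T are exactly zeros of F
  have hfix : ∀ x : A, T x = x ↔ F x = 0 := by
    intro x
    constructor
    · intro h
      have h2 : L x = -(F 0) - N x := by
        conv_lhs => rw [← h]
        show L (L.symm (-(F 0) - N x)) = _
        rw [L.apply_symm_apply]
      rw [hFexp x, h2]; abel
    · intro h
      have h3 := hFexp x
      rw [h] at h3
      have hsum : L x + N x = -(F 0) := eq_neg_of_add_eq_zero_right h3.symm
      have h2 : L x = -(F 0) - N x := eq_sub_iff_add_eq.mpr hsum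
      show L.symm (-(F 0) - N x) = x
      rw [← h2, L.symm_apply_apply]
  -- basic estimate on N
  have hNx : ∀ x ∈ ball (0 : A) r, ‖N x‖ ≤ C₂ * ‖x‖ * ‖x‖ := by
    intro x hx
    have h0 : (0 : A) ∈ ball (0 : A) r := mem_ball_self hr
    have := ha x hx 0 h0
    simpa [hN0] using this
  -- Lipschitz-type estimate for T on the ball
  have hTlip : ∀ x ∈ ball (0 : A) r, ∀ y ∈ ball (0 : A) r,
      ‖T x - T y‖ ≤ C₁ * (C₂ * (‖x‖ + ‖y‖) * ‖x - y‖) := by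
    intro x hx y hy
    have hsub : T x - T y = L.symm (N y - N x) := by
      simp only [hT]
      rw [← map_sub]
      congr 1
      abel
    rw [hsub]
    calc ‖(L.symm : B →L[ℝ] A) (N y - N x)‖
        ≤ ‖(L.symm : B →L[ℝ] A)‖ * ‖N y - N x‖ :=
          (L.symm : B →L[ℝ] A).le_opNorm _
      _ ≤ C₁ * (C₂ * (‖x‖ + ‖y‖) * ‖x - y‖) := by
          have h1 : ‖N y - N x‖ ≤ C₂ * (‖y‖ + ‖x‖) * ‖y - x‖ := ha y hy x hx
          have h2 : ‖y - x‖ = ‖x - y‖ := norm_sub_rev y x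
          have h3 : ‖N y - N x‖ ≤ C₂ * (‖x‖ + ‖y‖) * ‖x - y‖ := by
            rw [show ‖x‖ + ‖y‖ = ‖y‖ + ‖x‖ from add_comm _ _, ← h2]
            rw [show C₂ * (‖y‖ + ‖x‖) * ‖y - x‖ = C₂ * ((‖y‖ + ‖x‖) * ‖y - x‖) from by ring] at h1 ⊢
            exact h1
          exact mul_le_mul hL h3 (norm_nonneg _) (le_of_lt hC₁)
  -- estimate on ‖T x‖
  have hTbound : ∀ x ∈ ball (0 : A) r, ‖T x‖ ≤ C₁ * ‖F 0‖ + C₁ * (C₂ * ‖x‖ * ‖x‖) := by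
    intro x hx
    simp only [hT]
    calc ‖(L.symm : B →L[ℝ] A) (-(F 0) - N x)‖
        ≤ ‖(L.symm : B →L[ℝ] A)‖ * ‖-(F 0) - N x‖ := (L.symm : B →L[ℝ] A).le_opNorm _
      _ ≤ C₁ * (‖F 0‖ + ‖N x‖) := by
          apply mul_le_mul hL _ (norm_nonneg _) (le_of_lt hC₁)
          calc ‖-(F 0) - N x‖ ≤ ‖-(F 0)‖ + ‖N x‖ := norm_sub_le _ _
            _ = ‖F 0‖ + ‖N x‖ := by rw [norm_neg]
      _ ≤ C₁ * ‖F 0‖ + C₁ * (C₂ * ‖x‖ * ‖x‖) := by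
          have h4 := hNx x hx
          have h5 := mul_le_mul_of_nonneg_left h4 hC₁.le
          linarith
  -- the radius of the invariant closed ball
  set ρ : ℝ := min (2 * C₁ * ‖F 0‖) (9 * r / 10) with hρ
  have hρ0 : 0 ≤ ρ := le_min (by positivity) (by linarith)
  have hρr : ρ < r := lt_of_le_of_lt (min_le_right _ _) (by linarith)
  have hρ2 : ρ ≤ 2 * C₁ * ‖F 0‖ := min_le_left _ _
  have hballsub : closedBall (0 : A) ρ ⊆ ball (0 : A) r := fun x hx => by
    rw [mem_closedBall, dist_zero_right] at hx
    rw [mem_ball, dist_zero_right]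
    linarith
  have hCCρ : C₁ * C₂ * ρ * ρ ≤ ρ / 5 := by
    have h1 : C₁ * C₂ * ρ ≤ 1 / 5 := by
      have := mul_le_mul_of_nonneg_left hρr.le (mul_pos hC₁ hC₂).le
      nlinarith
    have := mul_le_mul_of_nonneg_right h1 hρ0
    linarith
  -- T maps the closed ball into itself
  have hmaps : MapsTo T (closedBall (0 : A) ρ) (closedBall (0 : A) ρ) := by
    intro x hx
    have hxr : x ∈ ball (0 : A) r := hballsub hx
    have hxρ : ‖x‖ ≤ ρ := by rwa [mem_closedBall, dist_zero_right] at hx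
    rw [mem_closedBall, dist_zero_right]
    have hB := hTbound x hxr
    have hxx : ‖x‖ * ‖x‖ ≤ ρ * ρ := mul_le_mul hxρ hxρ (norm_nonneg x) hρ0
    have hx2 : C₁ * (C₂ * ‖x‖ * ‖x‖) ≤ C₁ * C₂ * ρ * ρ := by
      have := mul_le_mul_of_nonneg_left hxx (mul_pos hC₁ hC₂).le
      nlinarith
    rcases le_total (2 * C₁ * ‖F 0‖) (9 * r / 10) with hc | hc
    · have hρeq : ρ = 2 * C₁ * ‖F 0‖ := min_eq_left hc
      have hhalf : C₁ * ‖F 0‖ = ρ / 2 := by rw [hρeq]; ring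
      linarith
    · have hρeq : ρ = 9 * r / 10 := min_eq_right hc
      have h6 : C₁ * ‖F 0‖ ≤ r / 2 := hbC
      rw [hρeq] at hCCρ hx2 ⊢
      linarith
  -- contraction constant
  set K : NNReal := Real.toNNReal (2 * C₁ * C₂ * r) with hK
  have hKcoe : (K : ℝ) = 2 * C₁ * C₂ * r := Real.coe_toNNReal _ (by positivity)
  have hcontr : ContractingWith K (hmaps.restrict T _ _) := by
    constructor
    · rw [← NNReal.coe_lt_one, hKcoe]; linarith
    · apply LipschitzWith.of_dist_le_mul
      rintro ⟨x, hx⟩ ⟨y, hy⟩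
      simp only [Subtype.dist_eq, MapsTo.val_restrict_apply]
      rw [dist_eq_norm, dist_eq_norm]
      have hxρ : ‖x‖ ≤ ρ := by rwa [mem_closedBall, dist_zero_right] at hx
      have hyρ : ‖y‖ ≤ ρ := by rwa [mem_closedBall, dist_zero_right] at hy
      have h1 := hTlip x (hballsub hx) y (hballsub hy)
      rw [hKcoe]
      have hsum : ‖x‖ + ‖y‖ ≤ 2 * r := by linarith
      have hstep := mul_le_mul_of_nonneg_right hsum (norm_nonneg (x - y))
      have hstep2 := mul_le_mul_of_nonneg_left hstep (mul_pos hC₁ hC₂).le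
      nlinarith
  -- apply the fixed point theorem
  have hsc : IsComplete (closedBall (0 : A) ρ) := (Metric.isClosed_closedBall).isComplete
  have h0mem : (0 : A) ∈ closedBall (0 : A) ρ := by
    rw [mem_closedBall, dist_zero_right, norm_zero]; exact hρ0
  obtain ⟨x, hxmem, hxfix, -, -⟩ :=
    hcontr.exists_fixedPoint' hsc hmaps h0mem (edist_ne_top _ _)
  have hxρ : ‖x‖ ≤ ρ := by rwa [mem_closedBall, dist_zero_right] at hxmem
  have hxball : x ∈ ball (0 : A) r := hballsub hxmem
  have hFx : F x = 0 := (hfix x).mp hxfix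
  refine ⟨x, hxball, hFx, le_trans hxρ hρ2, ?_⟩
  -- uniqueness
  intro y hy hFy
  have hyfix : T y = y := (hfix y).mpr hFy
  have h1 := hTlip y hy x hxball
  rw [hyfix, hxfix.eq] at h1
  have hyr : ‖y‖ < r := by rwa [mem_ball, dist_zero_right] at hy
  have hxr : ‖x‖ < r := by rwa [mem_ball, dist_zero_right] at hxball
  have hsum : ‖y‖ + ‖x‖ ≤ 2 * r := by linarith
  have hstep := mul_le_mul_of_nonneg_right hsum (norm_nonneg (y - x))
  have hstep2 := mul_le_mul_of_nonneg_left hstep (mul_pos hC₁ hC₂).le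
  have h2 : ‖y - x‖ ≤ 2 * C₁ * C₂ * r * ‖y - x‖ := by nlinarith
  have h3 : ‖y - x‖ ≤ 0 := by
    nlinarith [mul_nonneg (by linarith : (0:ℝ) ≤ 2 / 5 - 2 * C₁ * C₂ * r) (norm_nonneg (y - x))]
  have h4 : y - x = 0 := norm_le_zero_iff.mp h3
  exact sub_eq_zero.mp h4
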